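/- Let x, y, s be real numbers with 0 < x, 0 < y, x + y < s and s < 1. If sin(π(s − x − y))² = sin(π(s − y))², then x + 2y = 2s − 1. -/
import Mathlib


open Real

theorem stmt_19 (x y s : ℝ) (hx : 0 < x) (hy : 0 < y) (hxy : x + y < s) (hs : s < 1)
    (h : Real.sin (π*(s - x - y))^2 = Real.sin (π*(s - y))^2) :
    x + 2*y = 2*s - 1 := by
  have hπ := Real.pi_pos
  set a := π*(s - x - y) with ha
  set b := π*(s - y) with hb
  have hx1 : x < 1 := by linarith
  have ha0 : 0 < a := by
    apply mul_pos hπ; linarith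
  have haπ : a < π := by
    have : s - x - y < 1 := by linarith
    calc a < π * 1 := by apply mul_lt_mul_of_pos_left this hπ
    _ = π := mul_one π
  have hb0 : 0 < b := by apply mul_pos hπ; linarith
  have hbπ : b < π := by
    have : s - y < 1 := by linarith
    calc b < π * 1 := by apply mul_lt_mul_of_pos_left this hπ
    _ = π := mul_one π
  have hsa : 0 < Real.sin a := Real.sin_pos_of_pos_of_lt_pi ha0 haπ
  have hsb : 0 < Real.sin b := Real.sin_pos_of_pos_of_lt_pi hb0 hbπ
  have hsab : Real.sin a = Real.sin b := by
    rcases sq_eq_sq_iff_eq_or_eq_neg.mp h with h1 | h1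
    · exact h1
    · nlinarith
  have hsub : Real.sin a - Real.sin b = 0 := by linarith
  rw [Real.sin_sub_sin] at hsub
  have hsd : Real.sin ((a - b)/2) ≠ 0 := by
    have : (a - b)/2 = -(π * x / 2) := by rw [ha, hb]; ring
    rw [this, Real.sin_neg, neg_ne_zero]
    have h1 : 0 < π * x / 2 := by positivity
    have h2 : π * x / 2 < π := by nlinarith
    exact ne_of_gt (Real.sin_pos_of_pos_of_lt_pi h1 h2)
  have hcos : Real.cos ((a + b)/2) = 0 := by
    rcases mul_eq_zero.mp hsub with h1 | h1
    · rcases mul_eq_zero.mp h1 with h2 | h2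
      · norm_num at h2
      · exact absurd h2 hsd
    · exact h1
  have hmem : (a + b)/2 ∈ Set.Icc 0 π := by
    constructor <;> [linarith; linarith]
  have hmem2 : (π/2 : ℝ) ∈ Set.Icc 0 π := by
    constructor <;> linarith
  have heq : (a + b)/2 = π/2 := by
    apply Real.injOn_cos hmem hmem2
    rw [hcos, Real.cos_pi_div_two]
  have : π * (x + 2*y - (2*s - 1)) = 0 := by
    rw [ha, hb] at heq; ring_nf at heq ⊢; linarith
  have := mul_eq_zero.mp this
  rcases this with h1 | h1
  · linarith
  · linarith
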